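/- Define recursively λ_J = λ > 0 and λ_j = 16^{j-J} λ, and operators A_J = A with ρ(A) ≤ λ, S_j = I - 2.9 λ_j⁻¹ A_j + 2.15 λ_j⁻² A_j², and A_{j-1} = Q_jᵀ A_j Q_j where Q_j = S_j ∘ P_j with P_j an orthogonal projection onto a subspace. Then ρ(A_j) ≤ λ_j = 16^{j-J} λ for all 1 ≤ j ≤ J. -/

import Mathlib

open scoped RealInnerProductSpace

private lemma mg_scalar_key : ∀ t : ℝ, 0 ≤ t → t ≤ 1 →
    t * (1 - 2.9 * t + 2.15 * t ^ 2) ^ 2 ≤ 1 / 16 := by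
  intro t h0 h1
  have h2 : (0:ℝ) ≤ 1 - t := by linarith
  have quadpos : (0:ℝ) ≤ 0.800875*t^2 - 0.317*t + 0.0336 := by
    nlinarith [sq_nonneg (1.60175*t - 0.317)]
  nlinarith [mul_nonneg h2 (sq_nonneg (2.15*t^2 - 1.825*t + 0.17)),
    mul_nonneg h2 quadpos]

private lemma mg_scalar_key' (κ μ : ℝ) (hκ : 0 < κ) (h0 : 0 ≤ μ) (h1 : μ ≤ κ) :
    μ * (1 - 2.9 * κ⁻¹ * μ + 2.15 * (κ ^ 2)⁻¹ * μ ^ 2) ^ 2 ≤ κ / 16 := by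
  have ht0 : 0 ≤ μ / κ := div_nonneg h0 hκ.le
  have ht1 : μ / κ ≤ 1 := (div_le_one hκ).2 h1
  have hkey := mg_scalar_key (μ / κ) ht0 ht1
  have hκ' : κ ≠ 0 := hκ.ne'
  have heq : 1 - 2.9 * κ⁻¹ * μ + 2.15 * (κ ^ 2)⁻¹ * μ ^ 2
      = 1 - 2.9 * (μ/κ) + 2.15 * (μ/κ)^2 := by
    field_simp
  rw [heq]
  calc μ * (1 - 2.9*(μ/κ) + 2.15*(μ/κ)^2)^2
      = κ * ((μ/κ) * (1 - 2.9*(μ/κ) + 2.15*(μ/κ)^2)^2) := by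
        field_simp
    _ ≤ κ * (1/16) := mul_le_mul_of_nonneg_left hkey hκ.le
    _ = κ / 16 := by ring

private lemma mg_ev_of_form {H : Type*} [NormedAddCommGroup H] [InnerProductSpace ℝ H]
    (T : H →ₗ[ℝ] H) (c : ℝ) (h : ∀ v, ⟪T v, v⟫ ≤ c * ⟪v, v⟫) :
    ∀ μ : ℝ, Module.End.HasEigenvalue T μ → μ ≤ c := by
  intro μ hμ
  obtain ⟨v, hv⟩ := hμ.exists_hasEigenvector
  have hv0 : v ≠ 0 := hv.2
  have h1 := h v
  rw [hv.apply_eq_smul, real_inner_smul_left] at h1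
  have hpos : 0 < ⟪v, v⟫ := by
    rw [real_inner_self_eq_norm_sq]
    exact pow_pos (norm_pos_iff.2 hv0) 2
  exact le_of_mul_le_mul_right h1 hpos

private lemma mg_key_step {H : Type*} [NormedAddCommGroup H] [InnerProductSpace ℝ H]
    [FiniteDimensional ℝ H] (T S : H →ₗ[ℝ] H) (hT : T.IsSymmetric)
    (hpsd : ∀ v, 0 ≤ ⟪T v, v⟫) (κ : ℝ) (hκ : 0 < κ)
    (hev : ∀ μ : ℝ, Module.End.HasEigenvalue T μ → μ ≤ κ)
    (hSdef : S = LinearMap.id - (2.9 * κ⁻¹) • T + (2.15 * (κ^2)⁻¹) • (T ∘ₗ T)) (u : H) :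
    ⟪T (S u), S u⟫ ≤ κ/16 * ⟪u, u⟫ := by
  have hn : Module.finrank ℝ H = Module.finrank ℝ H := rfl
  set b := hT.eigenvectorBasis hn with hbdef
  set μs := hT.eigenvalues hn with hμdef
  have happ : ∀ i, T (b i) = μs i • b i := fun i => hT.apply_eigenvectorBasis hn i
  have hμ0 : ∀ i, 0 ≤ μs i := by
    intro i
    have h1 := hpsd (b i)
    rw [happ i, real_inner_smul_left, real_inner_self_eq_norm_sq,
      b.orthonormal.1 i] at h1
    simpa using h1
  have hμκ : ∀ i, μs i ≤ κ := fun i => hev _ (hT.hasEigenvalue_eigenvalues hn i)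
  set p : Fin (Module.finrank ℝ H) → ℝ :=
    fun i => 1 - 2.9*κ⁻¹*(μs i) + 2.15*(κ^2)⁻¹*(μs i)^2 with hp
  have hSb : ∀ i, S (b i) = p i • b i := by
    intro i
    rw [hSdef]
    simp only [LinearMap.add_apply, LinearMap.sub_apply, LinearMap.smul_apply,
      LinearMap.id_apply, LinearMap.comp_apply, happ i, map_smul, smul_smul]
    have hx : ∀ (x : H) (a c : ℝ), x - a • x + c • x = (1 - a + c) • x := by
      intro x a c; rw [add_smul, sub_smul, one_smul]
    rw [hx]
    congr 1
    simp only [hp]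
    ring
  set c : Fin (Module.finrank ℝ H) → ℝ := fun i => b.repr u i with hc
  have hu : u = ∑ i, c i • b i := (b.sum_repr u).symm
  have hSu : S u = ∑ i, (c i * p i) • b i := by
    conv_lhs => rw [hu]
    rw [map_sum]
    simp only [map_smul, hSb, smul_smul]
  have hTSu : T (S u) = ∑ i, (c i * p i * μs i) • b i := by
    rw [hSu, map_sum]
    simp only [map_smul, happ, smul_smul]
  have hinner1 : ⟪T (S u), S u⟫ = ∑ i, (c i * p i * μs i) * (c i * p i) := by
    rw [hTSu, hSu]
    simpa using b.orthonormal.inner_sum (fun i => c i * p i * μs i)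
      (fun i => c i * p i) Finset.univ
  have hinner2 : ⟪u, u⟫ = ∑ i, c i * c i := by
    conv_lhs => rw [hu]
    simpa using b.orthonormal.inner_sum c c Finset.univ
  rw [hinner1, hinner2, Finset.mul_sum]
  apply Finset.sum_le_sum
  intro i _
  have hkey := mg_scalar_key' κ (μs i) hκ (hμ0 i) (hμκ i)
  have hpi : p i = 1 - 2.9*κ⁻¹*(μs i) + 2.15*(κ^2)⁻¹*(μs i)^2 := by rw [hp]
  rw [← hpi] at hkey
  nlinarith [mul_le_mul_of_nonneg_left hkey (sq_nonneg (c i)), sq_nonneg (c i)]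

/-- Multigrid level-operator bound: with `λ_j = 16^{j-J} λ`,
`S_j = I - 2.9 λ_j⁻¹ A_j + 2.15 λ_j⁻² A_j²`, and `A_{j-1} = Q_jᵀ A_j Q_j`,
`Q_j = S_j ∘ P_{j-1}` (`P_k` the orthogonal projection onto `V_k`), starting from
`ρ(A_J) ≤ λ`, one has `ρ(A_j) ≤ 16^{j-J} λ` for all `1 ≤ j ≤ J`. -/
theorem stmt_9 {H : Type*} [NormedAddCommGroup H] [InnerProductSpace ℝ H]
    [FiniteDimensional ℝ H] (J : ℕ) (hJ : 1 ≤ J) (V : ℕ → Submodule ℝ H)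
    (hnest : ∀ j : ℕ, V j ≤ V (j + 1))
    (A S : ℕ → H →ₗ[ℝ] H) (lam : ℝ) (hlam : 0 < lam)
    (hsym : ∀ j : ℕ, (A j).IsSymmetric) (hpsd : ∀ (j : ℕ) (v : H), 0 ≤ ⟪A j v, v⟫)
    (hAJ : ∀ μ : ℝ, Module.End.HasEigenvalue (A J) μ → μ ≤ lam)
    (hS : ∀ j : ℕ, 1 ≤ j → j ≤ J →
      S j = LinearMap.id - (2.9 * (lam / 16 ^ (J - j))⁻¹) • A j
        + (2.15 * ((lam / 16 ^ (J - j)) ^ 2)⁻¹) • (A j ∘ₗ A j))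
    (hrec : ∀ j : ℕ, 1 ≤ j → j ≤ J →
      A (j - 1) =
        ((V (j - 1)).subtypeL.comp (Submodule.orthogonalProjection (V (j - 1)))).toLinearMap ∘ₗ
          S j ∘ₗ A j ∘ₗ S j ∘ₗ
            ((V (j - 1)).subtypeL.comp (Submodule.orthogonalProjection (V (j - 1)))).toLinearMap) :
    ∀ j : ℕ, 1 ≤ j → j ≤ J →
      ∀ μ : ℝ, Module.End.HasEigenvalue (A j) μ → μ ≤ lam / 16 ^ (J - j) := by
  have main : ∀ k : ℕ, k < J → ∀ μ : ℝ,
      Module.End.HasEigenvalue (A (J - k)) μ → μ ≤ lam / 16 ^ k := by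
    intro k
    induction k with
    | zero => intro _ μ hμ; simpa using hAJ μ (by simpa using hμ)
    | succ k ih =>
      intro hk μ hμ
      have hk' : k < J := Nat.lt_of_succ_lt hk
      set j := J - k with hj
      have hj1 : 1 ≤ j := by omega
      have hjJ : j ≤ J := by omega
      have hJj : J - j = k := by omega
      set κ := lam / 16 ^ k with hκdef
      have hκ : 0 < κ := by positivity
      have hSj := hS j hj1 hjJ
      rw [hJj] at hSj
      have ihj : ∀ μ : ℝ, Module.End.HasEigenvalue (A j) μ → μ ≤ κ := ih hk'
      set U := V (j - 1) with hU
      set Pl := ((V (j - 1)).subtypeL.comp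
        (Submodule.orthogonalProjection (V (j - 1)))).toLinearMap with hPl
      have hPapply : ∀ x : H, Pl x = (Submodule.orthogonalProjection U x : H) := by
        intro x; simp [hPl, hU]
      have hPsym : ∀ x y : H, ⟪Pl x, y⟫ = ⟪x, Pl y⟫ := by
        intro x y
        rw [hPapply, hPapply]
        have := Submodule.inner_starProjection_left_eq_right U x y
        simp only [Submodule.starProjection_apply] at this
        exact this
      have hPcontr : ∀ x : H, ⟪Pl x, Pl x⟫ ≤ ⟪x, x⟫ := by
        intro x
        have hPP : Pl (Pl x) = Pl x := by
          rw [hPapply, hPapply, Submodule.orthogonalProjection_mem_subspace_eq_self]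
        have h1 : ⟪Pl x, Pl x⟫ = ⟪x, Pl x⟫ := by
          rw [hPsym x (Pl x), hPP]
        have h2 : ⟪x, Pl x⟫ ≤ ‖x‖ * ‖Pl x‖ := real_inner_le_norm x (Pl x)
        have h3 : ‖Pl x‖ ≤ ‖x‖ := by
          rw [real_inner_self_eq_norm_sq] at h1
          nlinarith [norm_nonneg (Pl x), norm_nonneg x]
        rw [real_inner_self_eq_norm_sq, real_inner_self_eq_norm_sq]
        exact pow_le_pow_left₀ (norm_nonneg _) h3 2
      have hSsym : ∀ x y : H, ⟪S j x, y⟫ = ⟪x, S j y⟫ := by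
        intro x y
        rw [hSj]
        simp only [LinearMap.add_apply, LinearMap.sub_apply, LinearMap.smul_apply,
          LinearMap.id_apply, LinearMap.comp_apply]
        rw [inner_add_left, inner_add_right, inner_sub_left, inner_sub_right,
          real_inner_smul_left, real_inner_smul_right, real_inner_smul_left,
          real_inner_smul_right, hsym j x y, hsym j (A j x) y, hsym j x (A j y)]
      have hform : ∀ w : H, ⟪A (j - 1) w, w⟫ ≤ κ/16 * ⟪w, w⟫ := by
        intro w
        have e1 : ⟪A (j - 1) w, w⟫ = ⟪A j (S j (Pl w)), S j (Pl w)⟫ := by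
          rw [hrec j hj1 hjJ]
          simp only [LinearMap.comp_apply, ← hPl]
          rw [hPsym, hSsym]
        rw [e1]
        calc ⟪A j (S j (Pl w)), S j (Pl w)⟫ ≤ κ/16 * ⟪Pl w, Pl w⟫ :=
              mg_key_step (A j) (S j) (hsym j) (hpsd j) κ hκ ihj hSj (Pl w)
          _ ≤ κ/16 * ⟪w, w⟫ :=
              mul_le_mul_of_nonneg_left (hPcontr w) (by positivity)
      have hidx : J - (k + 1) = j - 1 := by omega
      rw [hidx] at hμ
      have hfin := mg_ev_of_form (A (j - 1)) (κ/16) hform μ hμ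
      calc μ ≤ κ / 16 := hfin
        _ = lam / 16 ^ (k + 1) := by
          rw [hκdef, pow_succ, ← div_div]
  intro j hj1 hjJ μ hμ
  have hk : J - j < J := by omega
  have hidx : J - (J - j) = j := by omega
  exact main (J - j) hk μ (by rwa [hidx])
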